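/- Let F be a graph and let W be an induced subgraph of F isomorphic to a subdivision of K₄ with at most one unsubdivided edge. Then for every vertex w of W, the graph obtained from W by deleting the closed neighborhood of w (within W) is connected. -/

import Mathlib

open SimpleGraph

namespace K4Aux

variable {α : Type} {W : SimpleGraph α}

/-- Reachability inside an induced subgraph, phrased on the ambient type. -/
def Reach (W : SimpleGraph α) (S : Set α) (u v : α) : Prop :=
  ∃ (hu : u ∈ S) (hv : v ∈ S), (W.induce S).Reachable ⟨u, hu⟩ ⟨v, hv⟩

lemma Reach.refl {S : Set α} {u : α} (hu : u ∈ S) : Reach W S u u :=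
  ⟨hu, hu, Reachable.refl _⟩

lemma Reach.symm {S : Set α} {u v : α} (h : Reach W S u v) : Reach W S v u := by
  obtain ⟨hu, hv, hr⟩ := h
  exact ⟨hv, hu, hr.symm⟩

lemma Reach.trans {S : Set α} {u v x : α} (h : Reach W S u v) (h' : Reach W S v x) :
    Reach W S u x := by
  obtain ⟨hu, hv, hr⟩ := h
  obtain ⟨hv', hx, hr'⟩ := h'
  exact ⟨hu, hx, hr.trans hr'⟩

lemma reach_of_walk {S : Set α} {u v : α} (p : W.Walk u v)
    (hp : ∀ x ∈ p.support, x ∈ S) : Reach W S u v := by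
  induction p with
  | nil => exact Reach.refl (hp _ (Walk.start_mem_support _))
  | @cons a c d h q ih =>
    have ha : a ∈ S := hp _ (by simp)
    have hc : c ∈ S := hp _ (by simp)
    have hadj : (W.induce S).Adj ⟨a, ha⟩ ⟨c, hc⟩ := by
      simp only [comap_adj, Function.Embedding.coe_subtype]
      exact h
    have := ih (fun x hx => hp _ (by simp [hx]))
    obtain ⟨h1, h2, hr⟩ := this
    exact ⟨ha, h2, (hadj.reachable).trans hr⟩

section Split

variable [DecidableEq α] {x y u : α} (q : W.Walk x y) (hu : u ∈ q.support)

lemma support_split :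
    q.support = (q.takeUntil u hu).support.dropLast ++ (q.dropUntil u hu).support := by
  have h1 : (q.takeUntil u hu).support.dropLast ++ [u] = (q.takeUntil u hu).support := by
    have := List.dropLast_append_getLast (l := (q.takeUntil u hu).support) (by simp)
    rwa [Walk.getLast_support] at this
  have h2 : (q.dropUntil u hu).support = u :: (q.dropUntil u hu).support.tail :=
    (q.dropUntil u hu).support_eq_cons
  conv_lhs => rw [← Walk.take_spec q hu]
  rw [Walk.support_append]
  conv_lhs => rw [← h1]
  conv_rhs => rw [h2]
  rw [List.append_assoc, List.singleton_append]

lemma edges_split :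
    q.edges = (q.takeUntil u hu).edges ++ (q.dropUntil u hu).edges := by
  conv_lhs => rw [← Walk.take_spec q hu]
  rw [Walk.edges_append]

lemma disj_split (hq : q.IsPath) : ∀ v, v ∈ (q.takeUntil u hu).support.dropLast →
    v ∈ (q.dropUntil u hu).support → False := by
  have hnd : q.support.Nodup := hq.support_nodup
  rw [support_split q hu] at hnd
  rw [List.nodup_append] at hnd
  intro v h1 h2
  exact hnd.2.2 v h1 v h2 rfl

lemma eq_of_mem_both (hq : q.IsPath) : ∀ v, v ∈ (q.takeUntil u hu).support →
    v ∈ (q.dropUntil u hu).support → v = u := by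
  intro v h1 h2
  have h3 := List.dropLast_append_getLast (l := (q.takeUntil u hu).support)
    (by simp)
  rw [Walk.getLast_support] at h3
  rw [← h3, List.mem_append, List.mem_singleton] at h1
  rcases h1 with h1 | h1
  · exact absurd h2 (fun h2 => disj_split q hu hq v h1 h2)
  · exact h1

lemma start_eq_of_mem_drop (hq : q.IsPath) (hx : x ∈ (q.dropUntil u hu).support) : x = u :=
  eq_of_mem_both q hu hq x (Walk.start_mem_support _) hx

lemma mem_take_of_not_mem_drop {v : α} (hv : v ∈ q.support)
    (h : v ∉ (q.dropUntil u hu).support) : v ∈ (q.takeUntil u hu).support := by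
  rw [support_split q hu, List.mem_append] at hv
  rcases hv with hv | hv
  · exact List.dropLast_subset _ hv
  · exact absurd hv h

end Split

lemma length_eq_one_of_ends_mem_edges {x y : α} (q : W.Walk x y) (hq : q.IsPath)
    (he : s(x, y) ∈ q.edges) : q.length = 1 := by
  cases q with
  | nil => simp at he
  | @cons _ c _ h p =>
    rw [Walk.edges_cons, List.mem_cons] at he
    rcases he with he | he
    · rw [Sym2.eq_iff] at he
      rcases he with ⟨-, hyc⟩ | ⟨hxc, hyx⟩
      · subst hyc
        have hp : p.IsPath := hq.of_cons
        rw [Walk.isPath_iff_eq_nil] at hp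
        subst hp
        simp
      · subst hxc
        exact absurd h (W.irrefl)
    · have : x ∈ p.support := p.fst_mem_support_of_mem_edges he
      rw [Walk.cons_isPath_iff] at hq
      exact absurd this hq.2

/-- A vertex of a walk distinct from both endpoints is an internal vertex. -/
lemma mem_internal_of_ne {x y v : α} (q : W.Walk x y) (hv : v ∈ q.support)
    (hx : v ≠ x) (hy : v ≠ y) : v ∈ q.support.tail.dropLast := by
  rw [q.support_eq_cons, List.mem_cons] at hv
  rcases hv with hv | hv
  · exact absurd hv hx
  · have hne : q.support.tail ≠ [] := List.ne_nil_of_mem hv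
    have h3 := List.dropLast_append_getLast hne
    rw [List.getLast_tail, Walk.getLast_support] at h3
    rw [← h3, List.mem_append, List.mem_singleton] at hv
    rcases hv with hv | hv
    · exact hv
    · exact absurd hv hy

lemma mem_support_of_internal {x y v : α} (q : W.Walk x y)
    (hv : v ∈ q.support.tail.dropLast) : v ∈ q.support :=
  List.mem_of_mem_tail (List.dropLast_subset _ hv)

lemma support_pair_of_length_one {x y : α} (q : W.Walk x y) (h : q.length = 1) :
    q.support = [x, y] := by
  have hlen : q.support.length = 2 := by rw [Walk.length_support, h]
  have hc := q.support_eq_cons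
  have htl : q.support.tail.length = 1 := by
    rw [hc] at hlen
    simpa using hlen
  have hne : q.support.tail ≠ [] := by
    intro h'
    rw [h'] at htl
    simp at htl
  have h3 := List.dropLast_append_getLast hne
  rw [List.getLast_tail, Walk.getLast_support] at h3
  have hdl : q.support.tail.dropLast = [] := by
    have h4 := List.length_dropLast (xs := q.support.tail)
    rw [htl] at h4
    exact List.length_eq_zero_iff.mp h4
  rw [hc, ← h3, hdl]
  rfl


section Main

variable [DecidableEq α]

lemma reach_end {S : Set α} {x y u : α} (q : W.Walk x y) (hq : q.IsPath)
    (hu : u ∈ q.support) (huS : u ∈ S)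
    (hside : ∀ v ∈ q.support, v ∉ S → v = x ∨ (s(x, v) ∈ q.edges ∧ x ∉ S)) :
    Reach W S u y ∧ y ∈ S := by
  have hdsub : ∀ v ∈ (q.dropUntil u hu).support, v ∈ S := by
    intro v hv
    by_contra hvS
    have hvq : v ∈ q.support := q.support_dropUntil_subset hu hv
    rcases hside v hvq hvS with rfl | ⟨he, hxS⟩
    · have h2 := start_eq_of_mem_drop q hu hq hv
      subst h2
      exact hvS huS
    · rw [edges_split q hu, List.mem_append] at he
      rcases he with he | he
      · have hvt : v ∈ (q.takeUntil u hu).support :=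
          (q.takeUntil u hu).snd_mem_support_of_mem_edges he
        have h2 := eq_of_mem_both q hu hq v hvt hv
        subst h2
        exact hvS huS
      · have hxd : x ∈ (q.dropUntil u hu).support :=
          (q.dropUntil u hu).fst_mem_support_of_mem_edges he
        have h2 := start_eq_of_mem_drop q hu hq hxd
        rw [h2] at hxS
        exact hxS huS
  exact ⟨reach_of_walk (q.dropUntil u hu) hdsub,
    hdsub y (q.dropUntil u hu).end_mem_support⟩

lemma reach_mid {S : Set α} {x y u w : α} (q : W.Walk x y) (hq : q.IsPath)
    (hu : u ∈ q.support) (huS : u ∈ S) (hwu : w ≠ u)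
    (hcompl : ∀ v, v ∉ S → v = w ∨ W.Adj w v)
    (hconf : ∀ v, W.Adj w v → s(w, v) ∈ q.edges) :
    (Reach W S u x ∧ x ∈ S) ∨ (Reach W S u y ∧ y ∈ S) := by
  by_cases hwd : w ∈ (q.dropUntil u hu).support
  · left
    have htsub : ∀ v ∈ (q.takeUntil u hu).support, v ∈ S := by
      intro v hv
      by_contra hvS
      rcases hcompl v hvS with rfl | hadj
      · exact hwu (eq_of_mem_both q hu hq v hv hwd)
      · have he := hconf v hadj
        rw [edges_split q hu, List.mem_append] at he
        rcases he with he | he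
        · have hwt : w ∈ (q.takeUntil u hu).support :=
            (q.takeUntil u hu).fst_mem_support_of_mem_edges he
          exact hwu (eq_of_mem_both q hu hq w hwt hwd)
        · have hvd : v ∈ (q.dropUntil u hu).support :=
            (q.dropUntil u hu).snd_mem_support_of_mem_edges he
          have h2 := eq_of_mem_both q hu hq v hv hvd
          subst h2
          exact hvS huS
    refine ⟨reach_of_walk (q.takeUntil u hu).reverse ?_,
      htsub x (q.takeUntil u hu).start_mem_support⟩
    intro z hz
    rw [Walk.support_reverse, List.mem_reverse] at hz
    exact htsub z hz
  · right
    have hdsub : ∀ v ∈ (q.dropUntil u hu).support, v ∈ S := by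
      intro v hv
      by_contra hvS
      rcases hcompl v hvS with rfl | hadj
      · exact hwd hv
      · have he := hconf v hadj
        rw [edges_split q hu, List.mem_append] at he
        rcases he with he | he
        · have hvt : v ∈ (q.takeUntil u hu).support :=
            (q.takeUntil u hu).snd_mem_support_of_mem_edges he
          have h2 := eq_of_mem_both q hu hq v hvt hv
          subst h2
          exact hvS huS
        · exact hwd ((q.dropUntil u hu).fst_mem_support_of_mem_edges he)
    exact ⟨reach_of_walk (q.dropUntil u hu) hdsub,
      hdsub y (q.dropUntil u hu).end_mem_support⟩

end Main

end K4Aux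

open K4Aux

/-- If `W` is (isomorphic to) a subdivision of `K₄` with at most one unsubdivided
edge — given by branch vertices `b 0, b 1, b 2, b 3` and internally disjoint
replacing paths `P i j` covering all vertices and edges of `W`, at most one of
which has length `1` — then for every vertex `w` of `W`, deleting the closed
neighborhood of `w` leaves a connected graph. -/
theorem stmt2 (α : Type) [Fintype α] (W : SimpleGraph α)
    (b : Fin 4 → α) (hb : Function.Injective b)
    (P : ∀ i j : Fin 4, i < j → W.Walk (b i) (b j))
    (hpath : ∀ (i j : Fin 4) (hij : i < j), (P i j hij).IsPath)
    (hlen : ∀ (i j : Fin 4) (hij : i < j), 0 < (P i j hij).length)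
    (hint : ∀ (i j : Fin 4) (hij : i < j) (k l : Fin 4) (hkl : k < l),
      (i, j) ≠ (k, l) →
      ∀ v ∈ (P i j hij).support.tail.dropLast, v ∉ (P k l hkl).support)
    (hintb : ∀ (i j : Fin 4) (hij : i < j),
      ∀ v ∈ (P i j hij).support.tail.dropLast, ∀ k : Fin 4, v ≠ b k)
    (hverts : ∀ v : α, ∃ (i j : Fin 4) (hij : i < j), v ∈ (P i j hij).support)
    (hedges : ∀ e ∈ W.edgeSet, ∃ (i j : Fin 4) (hij : i < j), e ∈ (P i j hij).edges)
    (hone : ∀ (i j : Fin 4) (hij : i < j) (k l : Fin 4) (hkl : k < l),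
      (P i j hij).length = 1 → (P k l hkl).length = 1 → (i, j) = (k, l)) :
    ∀ w : α, (W.induce {v : α | v ≠ w ∧ ¬ W.Adj w v}).Connected := by
  intro w
  classical
  set S : Set α := {v : α | v ≠ w ∧ ¬ W.Adj w v} with hSdef
  have hmemS : ∀ v : α, v ∈ S ↔ (v ≠ w ∧ ¬ W.Adj w v) := by
    intro v
    rw [hSdef]
    exact Iff.rfl
  have hcompl : ∀ v : α, v ∉ S → v = w ∨ W.Adj w v := by
    intro v hv
    by_contra h
    push_neg at h
    exact hv ((hmemS v).mpr ⟨h.1, h.2⟩)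
  have hwS : w ∉ S := fun h => ((hmemS w).mp h).1 rfl
  -- non-internal vertices of a path are endpoints
  have hend : ∀ (k l : Fin 4) (hkl : k < l) (v : α), v ∈ (P k l hkl).support →
      v ∉ (P k l hkl).support.tail.dropLast → v = b k ∨ v = b l := by
    intro k l hkl v hv hni
    by_contra h
    push_neg at h
    exact hni (mem_internal_of_ne _ hv h.1 h.2)
  -- a branch vertex is in the support of `P k l` only if it is an endpoint
  have hbmem : ∀ (m k l : Fin 4) (hkl : k < l), b m ∈ (P k l hkl).support →
      m = k ∨ m = l := by
    intro m k l hkl hmem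
    by_cases hi : b m ∈ (P k l hkl).support.tail.dropLast
    · exact absurd rfl (hintb k l hkl _ hi m)
    · rcases hend k l hkl _ hmem hi with h | h
      · exact Or.inl (hb h)
      · exact Or.inr (hb h)
  have hbns : ∀ (m k l : Fin 4) (hkl : k < l), m ≠ k → m ≠ l →
      b m ∉ (P k l hkl).support := by
    intro m k l hkl hk hl hmem
    rcases hbmem m k l hkl hmem with h | h
    · exact hk h
    · exact hl h
  -- adjacent branch vertices mean an unsubdivided edge
  have hadjbb : ∀ (k l : Fin 4) (hkl : k < l), W.Adj (b k) (b l) →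
      (P k l hkl).length = 1 := by
    intro k l hkl hadj
    obtain ⟨i, j, hij, he⟩ := hedges _ (W.mem_edgeSet.mpr hadj)
    have hk : b k ∈ (P i j hij).support := (P i j hij).fst_mem_support_of_mem_edges he
    have hl : b l ∈ (P i j hij).support := (P i j hij).snd_mem_support_of_mem_edges he
    have h1 := hbmem k i j hij hk
    have h2 := hbmem l i j hij hl
    rcases h1 with h1 | h1
    · rcases h2 with h2 | h2
      · exact absurd (h1.trans h2.symm) hkl.ne
      · subst h1
        subst h2
        exact length_eq_one_of_ends_mem_edges _ (hpath k l hij) he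
    · rcases h2 with h2 | h2
      · subst h1
        subst h2
        exact absurd hkl (lt_asymm hij)
      · exact absurd (h1.trans h2.symm) hkl.ne
  -- localization of edges at a branch vertex
  have hlocB : ∀ (m : Fin 4) (v : α), W.Adj (b m) v →
      ∃ (i j : Fin 4) (hij : i < j), (m = i ∨ m = j) ∧
        s(b m, v) ∈ (P i j hij).edges ∧ v ∈ (P i j hij).support := by
    intro m v hadj
    obtain ⟨i, j, hij, he⟩ := hedges _ (W.mem_edgeSet.mpr hadj)
    have hm : b m ∈ (P i j hij).support := (P i j hij).fst_mem_support_of_mem_edges he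
    have hv : v ∈ (P i j hij).support := (P i j hij).snd_mem_support_of_mem_edges he
    exact ⟨i, j, hij, hbmem m i j hij hm, he, hv⟩
  -- a branch vertex is adjacent to at most one other branch vertex
  have hlen1 : ∀ m k : Fin 4, m ≠ k → W.Adj (b m) (b k) →
      ∃ (i j : Fin 4) (hij : i < j), ((i, j) = (m, k) ∨ (i, j) = (k, m)) ∧
        (P i j hij).length = 1 := by
    intro m k hmk hadj
    rcases lt_trichotomy m k with h | h | h
    · exact ⟨m, k, h, Or.inl rfl, hadjbb m k h hadj⟩
    · exact absurd h hmk
    · exact ⟨k, m, h, Or.inr rfl, hadjbb k m h hadj.symm⟩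
  have huniqadj : ∀ m i j : Fin 4, i ≠ j → i ≠ m → j ≠ m →
      W.Adj (b m) (b i) → W.Adj (b m) (b j) → False := by
    intro m i j hij him hjm h1 h2
    obtain ⟨a1, c1, hac1, hp1, hl1⟩ := hlen1 m i (Ne.symm him) h1
    obtain ⟨a2, c2, hac2, hp2, hl2⟩ := hlen1 m j (Ne.symm hjm) h2
    have := hone a1 c1 hac1 a2 c2 hac2 hl1 hl2
    rw [this] at hp1
    rcases hp1 with hp1 | hp1 <;> rcases hp2 with hp2 | hp2 <;>
      rw [hp2] at hp1 <;> rw [Prod.mk.injEq] at hp1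
    · exact hij hp1.2.symm
    · exact hjm hp1.1
    · exact him hp1.1.symm
    · exact hij hp1.1.symm
  have hbranch : ∀ m : Fin 4, w = b m → ∃ z, z ∈ S ∧ ∀ u, u ∈ S → Reach W S z u := by
    intro m hm
    subst hm
    have hreachb : ∀ u, u ∈ S → ∃ t : Fin 4, t ≠ m ∧ b t ∈ S ∧ Reach W S u (b t) := by
      intro u huS
      obtain ⟨i, j, hij, hu⟩ := hverts u
      by_cases hmi : m = i
      · subst hmi
        by_cases hadjj : W.Adj (b m) (b j)
        · exfalso
          have hsup := support_pair_of_length_one _ (hadjbb m j hij hadjj)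
          rw [hsup] at hu
          simp only [List.mem_cons, List.not_mem_nil, or_false] at hu
          rcases hu with rfl | rfl
          · exact hwS huS
          · exact ((hmemS _).mp huS).2 hadjj
        · have hre : Reach W S u (b j) ∧ b j ∈ S := by
            refine reach_end (P m j hij) (hpath m j hij) hu huS ?_
            intro v hv hvS
            rcases hcompl v hvS with h | hadj
            · exact Or.inl h
            · obtain ⟨k, l, hkl, hmkl, he, hvkl⟩ := hlocB m v hadj
              by_cases hpair : (k, l) = (m, j)
              · rw [Prod.mk.injEq] at hpair
                obtain ⟨rfl, rfl⟩ := hpair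
                exact Or.inr ⟨he, hwS⟩
              · exfalso
                by_cases hvi : v ∈ (P m j hij).support.tail.dropLast
                · exact hint m j hij k l hkl (fun hE => hpair hE.symm) v hvi hvkl
                · rcases hend m j hij v hv hvi with rfl | rfl
                  · exact hadj.ne rfl
                  · exact hadjj hadj
          exact ⟨j, hij.ne', hre.2, hre.1⟩
      · by_cases hmj : m = j
        · subst hmj
          by_cases hadji : W.Adj (b m) (b i)
          · exfalso
            have hsup := support_pair_of_length_one _ (hadjbb i m hij hadji.symm)
            rw [hsup] at hu
            simp only [List.mem_cons, List.not_mem_nil, or_false] at hu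
            rcases hu with rfl | rfl
            · exact ((hmemS _).mp huS).2 hadji
            · exact hwS huS
          · have hu' : u ∈ (P i m hij).reverse.support := by
              rw [Walk.support_reverse, List.mem_reverse]
              exact hu
            have hre : Reach W S u (b i) ∧ b i ∈ S := by
              refine reach_end (P i m hij).reverse ((hpath i m hij).reverse) hu' huS ?_
              intro v hv hvS
              rw [Walk.support_reverse, List.mem_reverse] at hv
              rcases hcompl v hvS with h | hadj
              · exact Or.inl h
              · obtain ⟨k, l, hkl, hmkl, he, hvkl⟩ := hlocB m v hadj
                by_cases hpair : (k, l) = (i, m)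
                · rw [Prod.mk.injEq] at hpair
                  obtain ⟨rfl, rfl⟩ := hpair
                  refine Or.inr ⟨?_, hwS⟩
                  rw [Walk.edges_reverse, List.mem_reverse]
                  exact he
                · exfalso
                  by_cases hvi : v ∈ (P i m hij).support.tail.dropLast
                  · exact hint i m hij k l hkl (fun hE => hpair hE.symm) v hvi hvkl
                  · rcases hend i m hij v hv hvi with rfl | rfl
                    · exact hadji hadj
                    · exact hadj.ne rfl
            exact ⟨i, hij.ne, hre.2, hre.1⟩
        · have hbm_ns := hbns m i j hij hmi hmj
          by_cases hadjj : W.Adj (b m) (b j)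
          · have hadji : ¬ W.Adj (b m) (b i) :=
              fun h => huniqadj m i j hij.ne (Ne.symm hmi) (Ne.symm hmj) h hadjj
            have hu' : u ∈ (P i j hij).reverse.support := by
              rw [Walk.support_reverse, List.mem_reverse]
              exact hu
            have hre : Reach W S u (b i) ∧ b i ∈ S := by
              refine reach_end (P i j hij).reverse ((hpath i j hij).reverse) hu' huS ?_
              intro v hv hvS
              rw [Walk.support_reverse, List.mem_reverse] at hv
              rcases hcompl v hvS with h | hadj
              · exfalso
                rw [h] at hv
                exact hbm_ns hv
              · obtain ⟨k, l, hkl, hmkl, he, hvkl⟩ := hlocB m v hadj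
                by_cases hvi : v ∈ (P i j hij).support.tail.dropLast
                · refine absurd hvkl (hint i j hij k l hkl ?_ v hvi)
                  intro hE
                  rw [Prod.mk.injEq] at hE
                  rcases hmkl with h | h
                  · exact hmi (h.trans hE.1.symm)
                  · exact hmj (h.trans hE.2.symm)
                · rcases hend i j hij v hv hvi with rfl | rfl
                  · exact absurd hadj hadji
                  · exact Or.inl rfl
            exact ⟨i, Ne.symm hmi, hre.2, hre.1⟩
          · have hre : Reach W S u (b j) ∧ b j ∈ S := by
              refine reach_end (P i j hij) (hpath i j hij) hu huS ?_
              intro v hv hvS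
              rcases hcompl v hvS with h | hadj
              · exfalso
                rw [h] at hv
                exact hbm_ns hv
              · obtain ⟨k, l, hkl, hmkl, he, hvkl⟩ := hlocB m v hadj
                by_cases hvi : v ∈ (P i j hij).support.tail.dropLast
                · refine absurd hvkl (hint i j hij k l hkl ?_ v hvi)
                  intro hE
                  rw [Prod.mk.injEq] at hE
                  rcases hmkl with h | h
                  · exact hmi (h.trans hE.1.symm)
                  · exact hmj (h.trans hE.2.symm)
                · rcases hend i j hij v hv hvi with rfl | rfl
                  · exact Or.inl rfl
                  · exact absurd hadj hadjj
            exact ⟨j, Ne.symm hmj, hre.2, hre.1⟩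
    have hpairconn : ∀ (k l : Fin 4) (hkl : k < l), k ≠ m → l ≠ m →
        b k ∈ S → b l ∈ S → Reach W S (b k) (b l) := by
      intro k l hkl hkm hlm hkS hlS
      apply reach_of_walk (P k l hkl)
      intro v hv
      by_contra hvS
      rcases hcompl v hvS with h | hadj
      · rw [h] at hv
        exact hbns m k l hkl (Ne.symm hkm) (Ne.symm hlm) hv
      · obtain ⟨k', l', hkl', hmkl, he, hv'⟩ := hlocB m v hadj
        by_cases hvi : v ∈ (P k l hkl).support.tail.dropLast
        · refine hint k l hkl k' l' hkl' ?_ v hvi hv'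
          intro hE
          rw [Prod.mk.injEq] at hE
          rcases hmkl with h | h
          · exact hkm (h.trans hE.1.symm).symm
          · exact hlm (h.trans hE.2.symm).symm
        · rcases hend k l hkl v hv hvi with rfl | rfl
          · exact hvS hkS
          · exact hvS hlS
    have hex : ∀ m' : Fin 4, ∃ t1 t2 : Fin 4, t1 ≠ t2 ∧ t1 ≠ m' ∧ t2 ≠ m' := by decide
    obtain ⟨t1, t2, h12, h1m, h2m⟩ := hex m
    have hbtS : ∀ t : Fin 4, t ≠ m → ¬ W.Adj (b m) (b t) → b t ∈ S := by
      intro t htm hnadj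
      exact (hmemS _).mpr ⟨fun h => htm (hb h), hnadj⟩
    obtain ⟨t0, ht0m, ht0S⟩ : ∃ t0, t0 ≠ m ∧ b t0 ∈ S := by
      by_cases h1 : W.Adj (b m) (b t1)
      · exact ⟨t2, h2m, hbtS t2 h2m (fun h2 => huniqadj m t2 t1 h12.symm h2m h1m h2 h1)⟩
      · exact ⟨t1, h1m, hbtS t1 h1m h1⟩
    refine ⟨b t0, ht0S, ?_⟩
    intro u huS
    obtain ⟨t, htm, htS, hr⟩ := hreachb u huS
    have hconn : Reach W S (b t) (b t0) := by
      rcases lt_trichotomy t t0 with h | h | h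
      · exact hpairconn t t0 h htm ht0m htS ht0S
      · rw [h]
        exact Reach.refl ht0S
      · exact (hpairconn t0 t h ht0m htm ht0S htS).symm
    exact (hr.trans hconn).symm
  have hinternal : ∀ (i0 j0 : Fin 4) (h0 : i0 < j0),
      w ∈ (P i0 j0 h0).support.tail.dropLast →
      ∃ z, z ∈ S ∧ ∀ u, u ∈ S → Reach W S z u := by
    intro i0 j0 h0 hwint
    have hlocI : ∀ v, W.Adj w v →
        s(w, v) ∈ (P i0 j0 h0).edges ∧ v ∈ (P i0 j0 h0).support := by
      intro v hadj
      obtain ⟨k, l, hkl, he⟩ := hedges _ (W.mem_edgeSet.mpr hadj)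
      have hwk : w ∈ (P k l hkl).support := (P k l hkl).fst_mem_support_of_mem_edges he
      by_cases hpair : (i0, j0) = (k, l)
      · rw [Prod.mk.injEq] at hpair
        obtain ⟨rfl, rfl⟩ := hpair
        exact ⟨he, (P i0 j0 hkl).snd_mem_support_of_mem_edges he⟩
      · exact absurd hwk (hint i0 j0 h0 k l hkl hpair w hwint)
    have hwnotb : ∀ t : Fin 4, w ≠ b t := fun t => hintb i0 j0 h0 w hwint t
    have hbranchS : ∀ t : Fin 4, t ≠ i0 → t ≠ j0 → b t ∈ S := by
      intro t hti htj
      refine (hmemS _).mpr ⟨Ne.symm (hwnotb t), fun hadj => ?_⟩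
      obtain ⟨-, hmem⟩ := hlocI _ hadj
      rcases hbmem t i0 j0 h0 hmem with h | h
      · exact hti h
      · exact htj h
    have hwnots : ∀ (k l : Fin 4) (hkl : k < l), (i0, j0) ≠ (k, l) →
        w ∉ (P k l hkl).support := fun k l hkl hne => hint i0 j0 h0 k l hkl hne w hwint
    have hshared : ∀ (k l : Fin 4) (hkl : k < l), (i0, j0) ≠ (k, l) →
        ∀ v ∈ (P k l hkl).support, v ∉ S →
          (v = b k ∧ (k = i0 ∨ k = j0)) ∨ (v = b l ∧ (l = i0 ∨ l = j0)) := by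
      intro k l hkl hne v hv hvS
      rcases hcompl v hvS with h | hadj
      · rw [h] at hv
        exact absurd hv (hwnots k l hkl hne)
      · obtain ⟨he0, hv0⟩ := hlocI v hadj
        by_cases hvi : v ∈ (P i0 j0 h0).support.tail.dropLast
        · exact absurd hv (hint i0 j0 h0 k l hkl hne v hvi)
        · rcases hend i0 j0 h0 v hv0 hvi with rfl | rfl
          · by_cases hvi' : b i0 ∈ (P k l hkl).support.tail.dropLast
            · exact absurd rfl (hintb k l hkl _ hvi' i0)
            · rcases hend k l hkl _ hv hvi' with h | h
              · exact Or.inl ⟨h, Or.inl (hb h).symm⟩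
              · exact Or.inr ⟨h, Or.inl (hb h).symm⟩
          · by_cases hvi' : b j0 ∈ (P k l hkl).support.tail.dropLast
            · exact absurd rfl (hintb k l hkl _ hvi' j0)
            · rcases hend k l hkl _ hv hvi' with h | h
              · exact Or.inl ⟨h, Or.inr (hb h).symm⟩
              · exact Or.inr ⟨h, Or.inr (hb h).symm⟩
    have hpairconn : ∀ (k l : Fin 4) (hkl : k < l), (i0, j0) ≠ (k, l) →
        b k ∈ S → b l ∈ S → Reach W S (b k) (b l) := by
      intro k l hkl hne hkS hlS
      apply reach_of_walk (P k l hkl)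
      intro v hv
      by_contra hvS
      rcases hshared k l hkl hne v hv hvS with ⟨rfl, -⟩ | ⟨rfl, -⟩
      · exact hvS hkS
      · exact hvS hlS
    have hex : ∀ i j : Fin 4, ∃ t, t ≠ i ∧ t ≠ j := by decide
    obtain ⟨t0, ht0i, ht0j⟩ := hex i0 j0
    have ht0S : b t0 ∈ S := hbranchS t0 ht0i ht0j
    have hpairne' : ∀ t : Fin 4, (i0, j0) ≠ (t, t0) ∧ (i0, j0) ≠ (t0, t) := by
      intro t
      constructor <;> intro hE <;> rw [Prod.mk.injEq] at hE
      · exact ht0j hE.2.symm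
      · exact ht0i hE.1.symm
    have hconnz : ∀ t : Fin 4, b t ∈ S → Reach W S (b t) (b t0) := by
      intro t htS
      rcases lt_trichotomy t t0 with h | h | h
      · exact hpairconn t t0 h (hpairne' t).1 htS ht0S
      · rw [h]
        exact Reach.refl ht0S
      · exact (hpairconn t0 t h (hpairne' t).2 ht0S htS).symm
    refine ⟨b t0, ht0S, ?_⟩
    intro u huS
    refine Reach.symm ?_
    obtain ⟨k, l, hkl, hu⟩ := hverts u
    by_cases hpair : (i0, j0) = (k, l)
    · rw [Prod.mk.injEq] at hpair
      obtain ⟨rfl, rfl⟩ := hpair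
      have hmid := reach_mid (P i0 j0 h0) (hpath i0 j0 h0) hu huS
        (Ne.symm ((hmemS u).mp huS).1) hcompl (fun v h => (hlocI v h).1)
      rcases hmid with ⟨hr, hxS⟩ | ⟨hr, hyS⟩
      · exact hr.trans (hconnz i0 hxS)
      · exact hr.trans (hconnz j0 hyS)
    · by_cases hlio : l = i0 ∨ l = j0
      · have hki : k ≠ i0 := fun h => by
          rcases hlio with h' | h'
          · rw [h, h'] at hkl
            exact lt_irrefl _ hkl
          · exact hpair (by rw [h, h'])
        have hkj : k ≠ j0 := fun h => by
          rcases hlio with h' | h'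
          · rw [h, h'] at hkl
            exact lt_asymm hkl h0
          · rw [h, h'] at hkl
            exact lt_irrefl _ hkl
        have hu' : u ∈ (P k l hkl).reverse.support := by
          rw [Walk.support_reverse, List.mem_reverse]
          exact hu
        have hre : Reach W S u (b k) ∧ b k ∈ S := by
          refine reach_end (P k l hkl).reverse ((hpath k l hkl).reverse) hu' huS ?_
          intro v hv hvS
          rw [Walk.support_reverse, List.mem_reverse] at hv
          rcases hshared k l hkl hpair v hv hvS with ⟨rfl, hk'⟩ | ⟨rfl, -⟩
          · exfalso
            rcases hk' with h | h
            · exact hki h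
            · exact hkj h
          · exact Or.inl rfl
        exact hre.1.trans (hconnz k hre.2)
      · push_neg at hlio
        have hre : Reach W S u (b l) ∧ b l ∈ S := by
          refine reach_end (P k l hkl) (hpath k l hkl) hu huS ?_
          intro v hv hvS
          rcases hshared k l hkl hpair v hv hvS with ⟨rfl, -⟩ | ⟨rfl, hl'⟩
          · exact Or.inl rfl
          · exfalso
            rcases hl' with h | h
            · exact hlio.1 h
            · exact hlio.2 h
        exact hre.1.trans (hconnz l hre.2)
  have main : ∃ z, z ∈ S ∧ ∀ u, u ∈ S → Reach W S z u := by
    by_cases hbm : ∃ m, w = b m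
    · obtain ⟨m, hm⟩ := hbm
      exact hbranch m hm
    · push_neg at hbm
      obtain ⟨i0, j0, h0, hw0⟩ := hverts w
      exact hinternal i0 j0 h0 (mem_internal_of_ne _ hw0 (hbm i0) (hbm j0))
  obtain ⟨z, hz, hall⟩ := main
  rw [SimpleGraph.connected_iff_exists_forall_reachable]
  refine ⟨⟨z, hz⟩, ?_⟩
  rintro ⟨u, hu⟩
  obtain ⟨h1, h2, hr⟩ := hall u hu
  exact hr
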